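/- (Kirk's/Margrabe exchange option formula, exact case K = 0.) Let γ² denote the standard Gaussian measure on ℝ² (two independent standard normal coordinates u, w) and Φ the standard normal cumulative distribution function. Let x_e, x_g > 0, σ_e, σ_g > 0, ρ ∈ (−1, 1), and set σ = √(σ_g² − 2ρσ_eσ_g + σ_e²) (which is strictly positive). Then ∫_{ℝ²} (x_g·exp(σ_g·(ρu + √(1−ρ²)·w) − σ_g²/2) − x_e·exp(σ_e·u − σ_e²/2))⁺ dγ²(u, w) = x_g·Φ(ln(x_g/x_e)/σ + σ/2) − x_e·Φ(ln(x_g/x_e)/σ − σ/2). -/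

import Mathlib

open MeasureTheory ProbabilityTheory Real
open scoped ENNReal NNReal

noncomputable def pdf1 (x : ℝ) : ℝ := gaussianPDFReal 0 1 x

lemma pdf1_eq (x : ℝ) : pdf1 x = (Real.sqrt (2 * π))⁻¹ * rexp (-x ^ 2 / 2) := by
  simp [pdf1, gaussianPDFReal]

lemma pdf1_nonneg (x : ℝ) : 0 ≤ pdf1 x := gaussianPDFReal_nonneg 0 1 x

lemma pdf1_meas : Measurable pdf1 := measurable_gaussianPDFReal 0 1

lemma gint (f : ℝ → ℝ) :
    ∫ x, f x ∂(gaussianReal 0 1) = ∫ x, f x * pdf1 x := by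
  rw [gaussianReal_of_var_ne_zero _ one_ne_zero]
  have h : gaussianPDF 0 1 = fun x => ((Real.toNNReal (pdf1 x) : ℝ≥0) : ℝ≥0∞) := by
    funext x; simp [gaussianPDF, ENNReal.ofReal, pdf1]
  rw [h, integral_withDensity_eq_integral_smul (pdf1_meas.real_toNNReal) f]
  congr 1; funext x
  rw [NNReal.smul_def, Real.coe_toNNReal _ (pdf1_nonneg x), smul_eq_mul, mul_comm]

lemma pdf1_shift (s x : ℝ) : pdf1 (x - s) = rexp (s * x - s ^ 2 / 2) * pdf1 x := by
  rw [pdf1_eq, pdf1_eq, mul_comm (rexp _), mul_assoc, ← Real.exp_add]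
  congr 1
  ring

lemma tilt (s : ℝ) (f : ℝ → ℝ) :
    ∫ x, rexp (s * x - s ^ 2 / 2) * f x ∂(gaussianReal 0 1)
      = ∫ x, f (x + s) ∂(gaussianReal 0 1) := by
  rw [gint, gint]
  have : (fun x => f (x + s) * pdf1 x) = fun x => (fun y => f y * pdf1 (y - s)) (x + s) := by
    funext x; simp
  rw [this, integral_add_right_eq_self (fun y => f y * pdf1 (y - s)) s]
  congr 1; funext x
  rw [pdf1_shift]; ring

lemma gint_integrable (f : ℝ → ℝ) :
    Integrable f (gaussianReal 0 1) ↔ Integrable (fun x => f x * pdf1 x) := by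
  rw [gaussianReal_of_var_ne_zero _ one_ne_zero]
  rw [integrable_withDensity_iff (measurable_gaussianPDF 0 1)
    (Filter.Eventually.of_forall fun x => ENNReal.ofReal_lt_top)]
  constructor <;> intro h <;> refine h.congr (Filter.Eventually.of_forall fun x => ?_) <;>
    simp only [gaussianPDF, ENNReal.toReal_ofReal (gaussianPDFReal_nonneg 0 1 x), pdf1]

lemma integrable_exp_mul_gaussian (c : ℝ) :
    Integrable (fun x => rexp (c * x)) (gaussianReal 0 1) := by
  rw [gint_integrable]
  have h : Integrable (fun x : ℝ => rexp (c ^ 2 / 2) * ((Real.sqrt (2 * π))⁻¹ *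
      rexp (-(1/2) * (x - c) ^ 2))) := by
    exact (((integrable_exp_neg_mul_sq (by norm_num : (0:ℝ) < 1/2)).comp_sub_right
      c).const_mul _).const_mul _
  refine h.congr (Filter.Eventually.of_forall fun x => ?_)
  show rexp (c ^ 2 / 2) * ((Real.sqrt (2 * π))⁻¹ * rexp (-(1 / 2) * (x - c) ^ 2))
    = rexp (c * x) * pdf1 x
  have e : rexp (c ^ 2 / 2) * rexp (-(1 / 2) * (x - c) ^ 2) = rexp (c * x) * rexp (-x ^ 2 / 2) := by
    rw [← Real.exp_add, ← Real.exp_add]; congr 1; ring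
  calc rexp (c ^ 2 / 2) * ((Real.sqrt (2 * π))⁻¹ * rexp (-(1 / 2) * (x - c) ^ 2))
      = (Real.sqrt (2 * π))⁻¹ * (rexp (c ^ 2 / 2) * rexp (-(1 / 2) * (x - c) ^ 2)) := by ring
    _ = (Real.sqrt (2 * π))⁻¹ * (rexp (c * x) * rexp (-x ^ 2 / 2)) := by rw [e]
    _ = rexp (c * x) * pdf1 x := by rw [pdf1_eq]; ring

/-- The cumulative distribution function of the standard Gaussian measure on `ℝ`. -/
noncomputable def stdNormalCDF (x : ℝ) : ℝ := ((gaussianReal 0 1) (Set.Iic x)).toReal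

lemma Phi_eq (t : ℝ) :
    stdNormalCDF t = ∫ x, Set.indicator (Set.Iic t) (fun _ => (1:ℝ)) x * pdf1 x := by
  rw [← gint, stdNormalCDF, ← measureReal_def, ← integral_indicator_one measurableSet_Iic]
  rfl

lemma Q_eq (s : ℝ) :
    ((gaussianReal 0 1) (Set.Ici s)).toReal
      = ∫ x, Set.indicator (Set.Ici s) (fun _ => (1:ℝ)) x * pdf1 x := by
  rw [← gint, ← measureReal_def, ← integral_indicator_one measurableSet_Ici]
  rfl

lemma Q_eq_Phi (s : ℝ) : ((gaussianReal 0 1) (Set.Ici s)).toReal = stdNormalCDF (-s) := by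
  rw [Q_eq, Phi_eq]
  rw [← integral_neg_eq_self (fun x => Set.indicator (Set.Iic (-s)) (fun _ => (1:ℝ)) x * pdf1 x)]
  congr 1; funext x
  have h1 : Set.indicator (Set.Iic (-s)) (fun _ => (1:ℝ)) (-x)
      = Set.indicator (Set.Ici s) (fun _ => (1:ℝ)) x := by
    simp only [Set.indicator_apply, Set.mem_Iic, Set.mem_Ici, neg_le_neg_iff]
  have h2 : pdf1 (-x) = pdf1 x := by rw [pdf1_eq, pdf1_eq, neg_pow]; ring_nf
  rw [h1, h2]

lemma int_pdf_affine {β : ℝ} (hβ : 0 < β) (t : ℝ) (f : ℝ → ℝ) :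
    ∫ x, f ((x - t) / β) = β * ∫ x, f x := by
  rw [show (fun x : ℝ => f ((x - t) / β)) = fun x => (fun y => f (y / β)) (x - t) from rfl,
    integral_sub_right_eq_self (fun y => f (y / β)) t,
    MeasureTheory.Measure.integral_comp_div f β, abs_of_pos hβ, smul_eq_mul]

lemma integrable_pdf_affine {β : ℝ} (hβ : 0 < β) (t : ℝ) :
    Integrable (fun x => pdf1 ((x - t) / β)) := by
  have h : Integrable (fun x : ℝ => (Real.sqrt (2 * π))⁻¹
      * rexp (-(1 / (2 * β ^ 2)) * (x - t) ^ 2)) :=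
    ((integrable_exp_neg_mul_sq (by positivity)).comp_sub_right t).const_mul _
  refine h.congr (Filter.Eventually.of_forall fun x => ?_)
  show (Real.sqrt (2 * π))⁻¹ * rexp (-(1 / (2 * β ^ 2)) * (x - t) ^ 2) = pdf1 ((x - t) / β)
  rw [pdf1_eq]
  congr 1
  rw [div_pow]
  field_simp

lemma conv_pdf {α β σ : ℝ} (hβ : 0 < β) (hσ : 0 < σ) (hσ2 : σ ^ 2 = α ^ 2 + β ^ 2) (x : ℝ) :
    ∫ u, pdf1 u * pdf1 ((x - α * u) / β) = (β / σ) * pdf1 (x / σ) := by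
  have hptwise : (fun u => pdf1 u * pdf1 ((x - α * u) / β))
      = fun u => (((Real.sqrt (2 * π))⁻¹) ^ 2 * rexp (-x ^ 2 / (2 * σ ^ 2)))
          * rexp (-(σ ^ 2 / (2 * β ^ 2)) * (u - α * x / σ ^ 2) ^ 2) := by
    funext u
    rw [pdf1_eq, pdf1_eq]
    rw [show (Real.sqrt (2*π))⁻¹ * rexp (-u^2/2) * ((Real.sqrt (2*π))⁻¹ * rexp (-((x-α*u)/β)^2/2))
      = ((Real.sqrt (2*π))⁻¹)^2 * (rexp (-u^2/2) * rexp (-((x-α*u)/β)^2/2)) by ring,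
      ← Real.exp_add, mul_assoc, ← Real.exp_add]
    congr 2
    rw [hσ2]
    have h1 : α ^ 2 + β ^ 2 ≠ 0 := by positivity
    field_simp
    ring
  rw [hptwise, MeasureTheory.integral_const_mul,
    integral_sub_right_eq_self (fun u => rexp (-(σ ^ 2 / (2 * β ^ 2)) * u ^ 2)) (α * x / σ ^ 2),
    integral_gaussian]
  have hs : Real.sqrt (π / (σ ^ 2 / (2 * β ^ 2))) = Real.sqrt (2 * π) * (β / σ) := by
    rw [show π / (σ ^ 2 / (2 * β ^ 2)) = (2 * π) * (β / σ) ^ 2 by field_simp,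
      Real.sqrt_mul (by positivity), Real.sqrt_sq (by positivity)]
  rw [hs, pdf1_eq]
  have h2 : -(x / σ) ^ 2 / 2 = -x ^ 2 / (2 * σ ^ 2) := by field_simp
  rw [h2]
  have hpos : (0:ℝ) < Real.sqrt (2 * π) := Real.sqrt_pos.mpr (by positivity)
  field_simp

lemma prob_halfplane {α β σ : ℝ} (hβ : 0 < β) (hσ : 0 < σ) (hσ2 : σ ^ 2 = α ^ 2 + β ^ 2)
    (c : ℝ) :
    ∫ u, (∫ w, (if c ≤ α * u + β * w then (1:ℝ) else 0) ∂(gaussianReal 0 1))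
        ∂(gaussianReal 0 1)
      = stdNormalCDF (-(c / σ)) := by
  set H : ℝ → ℝ → ℝ := fun u x =>
    Set.indicator (Set.Ici c) (fun _ => (1:ℝ)) x * (β⁻¹ * (pdf1 ((x - α * u) / β) * pdf1 u))
    with hH
  -- inner integral identity
  have hQin : ∀ u : ℝ, ∫ w, (if c ≤ α * u + β * w then (1:ℝ) else 0) ∂(gaussianReal 0 1)
      = β⁻¹ * ∫ x, Set.indicator (Set.Ici c) (fun _ => (1:ℝ)) x * pdf1 ((x - α * u) / β) := by
    intro u
    have hiff : ∀ w : ℝ, (c ≤ α * u + β * w) ↔ ((c - α * u) / β ≤ w) := by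
      intro w
      rw [div_le_iff₀ hβ]
      constructor <;> intro <;> nlinarith [mul_comm w β]
    have h1 : (fun w => if c ≤ α * u + β * w then (1:ℝ) else 0)
        = Set.indicator (Set.Ici ((c - α * u) / β)) (fun _ => (1:ℝ)) := by
      funext w
      rw [Set.indicator_apply]
      exact if_congr ((hiff w).trans (Set.mem_Ici).symm) rfl rfl
    rw [h1]
    have h2 : ∫ w, Set.indicator (Set.Ici ((c - α * u) / β)) (fun _ => (1:ℝ)) w
          ∂(gaussianReal 0 1)
        = ((gaussianReal 0 1) (Set.Ici ((c - α * u) / β))).toReal := by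
      rw [← measureReal_def, ← integral_indicator_one measurableSet_Ici]; rfl
    rw [h2, Q_eq]
    have h4 : ∫ x, Set.indicator (Set.Ici c) (fun _ => (1:ℝ)) x * pdf1 ((x - α * u) / β)
        = β * ∫ y, Set.indicator (Set.Ici ((c - α * u) / β)) (fun _ => (1:ℝ)) y * pdf1 y := by
      rw [← int_pdf_affine hβ (α * u)
        (fun y => Set.indicator (Set.Ici ((c - α * u) / β)) (fun _ => (1:ℝ)) y * pdf1 y)]
      congr 1
      funext x
      simp only [Set.indicator_apply, Set.mem_Ici]
      have hx : ((c - α * u) / β ≤ (x - α * u) / β) ↔ (c ≤ x) := by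
        rw [div_le_div_iff_of_pos_right hβ]
        constructor <;> intro <;> linarith
      rw [if_congr hx.symm rfl rfl]
    rw [h4, ← mul_assoc, inv_mul_cancel₀ hβ.ne', one_mul]
  -- measurability of uncurry H
  have hHmeas : Measurable (Function.uncurry H) := by
    apply Measurable.mul
    · exact (measurable_const.indicator measurableSet_Ici).comp measurable_snd
    · apply Measurable.const_mul
      apply Measurable.mul
      · exact pdf1_meas.comp ((measurable_snd.sub (measurable_fst.const_mul α)).div_const β)
      · exact pdf1_meas.comp measurable_fst
  -- slice integrability
  have hslice : ∀ u : ℝ, Integrable (fun x => H u x) := by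
    intro u
    have hbase : Integrable (fun x => (β⁻¹ * pdf1 u) * pdf1 ((x - α * u) / β)) :=
      (integrable_pdf_affine hβ (α * u)).const_mul _
    have := (hbase.indicator (measurableSet_Ici (a := c)))
    refine this.congr (Filter.Eventually.of_forall fun x => ?_)
    rw [hH]
    simp only [Set.indicator_apply]
    split_ifs <;> simp <;> ring
  -- pointwise bound on slice integrals
  have hslice_le : ∀ u : ℝ, ∫ x, ‖H u x‖ ≤ pdf1 u := by
    intro u
    have h1 : ∀ x, ‖H u x‖ = H u x := by
      intro x
      apply Real.norm_of_nonneg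
      rw [hH]
      simp only [Set.indicator_apply]
      have := pdf1_nonneg ((x - α * u) / β)
      have := pdf1_nonneg u
      split_ifs <;> positivity
    simp only [h1]
    have hmaj : Integrable (fun x => β⁻¹ * (pdf1 ((x - α * u) / β) * pdf1 u)) := by
      have := ((integrable_pdf_affine hβ (α * u)).const_mul (β⁻¹ * pdf1 u))
      refine this.congr (Filter.Eventually.of_forall fun x => ?_)
      ring_nf
    have hle : ∫ x, H u x ≤ ∫ x, β⁻¹ * (pdf1 ((x - α * u) / β) * pdf1 u) := by
      refine integral_mono (hslice u) hmaj fun x => ?_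
      rw [hH]
      simp only [Set.indicator_apply]
      have := pdf1_nonneg ((x - α * u) / β)
      have := pdf1_nonneg u
      split_ifs <;> simp <;> positivity
    refine hle.trans ?_
    rw [show (fun x => β⁻¹ * (pdf1 ((x - α * u) / β) * pdf1 u))
      = fun x => (β⁻¹ * pdf1 u) * pdf1 ((x - α * u) / β) by funext x; ring]
    rw [MeasureTheory.integral_const_mul, int_pdf_affine hβ]
    have hint1 : ∫ x, pdf1 x = 1 := integral_gaussianPDFReal_eq_one 0 one_ne_zero
    rw [hint1, mul_one]
    exact le_of_eq (by field_simp)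
  -- integrability on the product
  have hint : Integrable (Function.uncurry H) (volume.prod volume) := by
    rw [MeasureTheory.integrable_prod_iff hHmeas.aestronglyMeasurable]
    constructor
    · exact Filter.Eventually.of_forall hslice
    · refine (integrable_gaussianPDFReal 0 1).mono ?_
        (Filter.Eventually.of_forall fun u => ?_)
      · exact hHmeas.norm.aestronglyMeasurable.integral_prod_right'
      · rw [Real.norm_of_nonneg (integral_nonneg fun x => norm_nonneg _)]
        exact (hslice_le u).trans (le_abs_self _)
  -- main computation
  calc ∫ u, (∫ w, (if c ≤ α * u + β * w then (1:ℝ) else 0) ∂(gaussianReal 0 1))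
        ∂(gaussianReal 0 1)
      = ∫ u, ∫ x, H u x := by
        rw [gint]
        congr 1
        funext u
        rw [hQin u, mul_assoc, ← MeasureTheory.integral_mul_const,
          ← MeasureTheory.integral_const_mul]
        congr 1
        funext x
        simp only [hH]
        ring
    _ = ∫ x, ∫ u, H u x := MeasureTheory.integral_integral_swap hint
    _ = ∫ x, Set.indicator (Set.Ici c) (fun _ => (1:ℝ)) x * (σ⁻¹ * pdf1 (x / σ)) := by
        congr 1
        funext x
        rw [hH]
        have : ∀ u : ℝ, Set.indicator (Set.Ici c) (fun _ => (1:ℝ)) x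
            * (β⁻¹ * (pdf1 ((x - α * u) / β) * pdf1 u))
            = (Set.indicator (Set.Ici c) (fun _ => (1:ℝ)) x * β⁻¹)
              * (pdf1 u * pdf1 ((x - α * u) / β)) := fun u => by ring
        simp only [this]
        rw [MeasureTheory.integral_const_mul, conv_pdf hβ hσ hσ2]
        field_simp
    _ = σ⁻¹ * ∫ x, (fun y => Set.indicator (Set.Ici (c / σ)) (fun _ => (1:ℝ)) y * pdf1 y)
          (x / σ) := by
        rw [← MeasureTheory.integral_const_mul]
        congr 1
        funext x
        simp only [Set.indicator_apply, Set.mem_Ici]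
        have : (c / σ ≤ x / σ) ↔ (c ≤ x) := by
          rw [div_le_div_iff_of_pos_right hσ]
        rw [if_congr this.symm rfl rfl]
        split_ifs <;> ring
    _ = stdNormalCDF (-(c / σ)) := by
        rw [MeasureTheory.Measure.integral_comp_div
          (fun y => Set.indicator (Set.Ici (c / σ)) (fun _ => (1:ℝ)) y * pdf1 y) σ,
          abs_of_pos hσ, smul_eq_mul, ← mul_assoc, inv_mul_cancel₀ hσ.ne', one_mul,
          ← Q_eq, Q_eq_Phi]

set_option maxHeartbeats 1000000 in
/-- Kirk's / Margrabe's exchange option formula (exact case `K = 0`): for jointly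
log-normal underlyings with correlation `ρ`, realized from two independent standard
Gaussian coordinates, the spread option price is
`x_g·Φ(ln(x_g/x_e)/σ + σ/2) − x_e·Φ(ln(x_g/x_e)/σ − σ/2)`
with `σ = √(σ_g² − 2ρσ_eσ_g + σ_e²)`. -/
theorem kirk_margrabe_exchange_formula
    (xe xg σe σg ρ : ℝ) (hxe : 0 < xe) (hxg : 0 < xg)
    (hσe : 0 < σe) (hσg : 0 < σg) (hρ : ρ ∈ Set.Ioo (-1 : ℝ) 1) :
    let σ := Real.sqrt (σg ^ 2 - 2 * ρ * σe * σg + σe ^ 2)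
    0 < σ ∧
    ∫ uw : ℝ × ℝ,
        max (xg * Real.exp (σg * (ρ * uw.1 + Real.sqrt (1 - ρ ^ 2) * uw.2) - σg ^ 2 / 2) -
             xe * Real.exp (σe * uw.1 - σe ^ 2 / 2)) 0
      ∂((gaussianReal 0 1).prod (gaussianReal 0 1)) =
      xg * stdNormalCDF (Real.log (xg / xe) / σ + σ / 2) -
      xe * stdNormalCDF (Real.log (xg / xe) / σ - σ / 2) := by
  intro σ
  obtain ⟨hρ1, hρ2⟩ := hρ
  have h1ρ : (0:ℝ) < 1 - ρ ^ 2 := by nlinarith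
  have hvpos : 0 < σg ^ 2 - 2 * ρ * σe * σg + σe ^ 2 := by
    nlinarith [sq_nonneg (σg - σe), sq_nonneg (σg + σe), mul_pos hσe hσg]
  have hσ : 0 < σ := Real.sqrt_pos.mpr hvpos
  have hσsq : σ ^ 2 = σg ^ 2 - 2 * ρ * σe * σg + σe ^ 2 := Real.sq_sqrt hvpos.le
  set β := σg * Real.sqrt (1 - ρ ^ 2) with hβdef
  have hβ : 0 < β := mul_pos hσg (Real.sqrt_pos.mpr h1ρ)
  have hβsq : β ^ 2 = σg ^ 2 * (1 - ρ ^ 2) := by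
    rw [hβdef, mul_pow, Real.sq_sqrt h1ρ.le]
  set α := σg * ρ - σe with hαdef
  have hσ2 : σ ^ 2 = α ^ 2 + β ^ 2 := by rw [hσsq, hβsq, hαdef]; ring
  refine ⟨hσ, ?_⟩
  set t0 := Real.log xe - Real.log xg + (σg ^ 2 - σe ^ 2) / 2 with ht0
  set Xg : ℝ × ℝ → ℝ := fun p =>
    xg * rexp (σg * (ρ * p.1 + Real.sqrt (1 - ρ ^ 2) * p.2) - σg ^ 2 / 2) with hXgdef
  set Xe : ℝ × ℝ → ℝ := fun p => xe * rexp (σe * p.1 - σe ^ 2 / 2) with hXedef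
  set S : Set (ℝ × ℝ) := {p | t0 ≤ α * p.1 + β * p.2} with hSdef
  have hS : MeasurableSet S :=
    measurableSet_le measurable_const ((measurable_fst.const_mul α).add
      (measurable_snd.const_mul β))
  have hcond : ∀ p : ℝ × ℝ, (Xe p ≤ Xg p) ↔ t0 ≤ α * p.1 + β * p.2 := by
    intro p
    rw [hXedef, hXgdef]
    simp only []
    rw [show xe * rexp (σe * p.1 - σe ^ 2 / 2)
        = rexp (Real.log xe + (σe * p.1 - σe ^ 2 / 2)) by
      rw [Real.exp_add, Real.exp_log hxe]]
    rw [show xg * rexp (σg * (ρ * p.1 + Real.sqrt (1 - ρ ^ 2) * p.2) - σg ^ 2 / 2)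
        = rexp (Real.log xg + (σg * (ρ * p.1 + Real.sqrt (1 - ρ ^ 2) * p.2) - σg ^ 2 / 2)) by
      rw [Real.exp_add, Real.exp_log hxg]]
    rw [Real.exp_le_exp, ht0, hαdef, hβdef]
    have hd1 : σg * (ρ * p.1 + Real.sqrt (1 - ρ ^ 2) * p.2)
        = σg * ρ * p.1 + σg * Real.sqrt (1 - ρ ^ 2) * p.2 := by ring
    have hd2 : (σg * ρ - σe) * p.1 = σg * ρ * p.1 - σe * p.1 := by ring
    constructor <;> intro h <;> linarith [hd1, hd2]
  -- integrability
  have hXgInt : Integrable Xg ((gaussianReal 0 1).prod (gaussianReal 0 1)) := by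
    have h1 := (integrable_exp_mul_gaussian (σg * ρ)).const_mul (xg * rexp (-σg ^ 2 / 2))
    have h2 := integrable_exp_mul_gaussian β
    refine (h1.mul_prod h2).congr (Filter.Eventually.of_forall fun p => ?_)
    show xg * rexp (-σg ^ 2 / 2) * rexp (σg * ρ * p.1) * rexp (β * p.2) = Xg p
    rw [hXgdef]
    simp only []
    rw [mul_assoc, mul_assoc, ← Real.exp_add, ← Real.exp_add, hβdef]
    congr 2
    ring
  have hXeInt : Integrable Xe ((gaussianReal 0 1).prod (gaussianReal 0 1)) := by
    have h1 := (integrable_exp_mul_gaussian σe).const_mul (xe * rexp (-σe ^ 2 / 2))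
    have h2 : Integrable (fun _ : ℝ => (1:ℝ)) (gaussianReal 0 1) := integrable_const 1
    refine (h1.mul_prod h2).congr (Filter.Eventually.of_forall fun p => ?_)
    show xe * rexp (-σe ^ 2 / 2) * rexp (σe * p.1) * 1 = Xe p
    rw [hXedef]
    simp only []
    rw [mul_one, mul_assoc, ← Real.exp_add]
    congr 2
    ring
  -- split the max
  have hsplit : (fun uw : ℝ × ℝ =>
      max (xg * Real.exp (σg * (ρ * uw.1 + Real.sqrt (1 - ρ ^ 2) * uw.2) - σg ^ 2 / 2) -
           xe * Real.exp (σe * uw.1 - σe ^ 2 / 2)) 0)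
      = fun p => S.indicator Xg p - S.indicator Xe p := by
    funext p
    have hXgXe : xg * Real.exp (σg * (ρ * p.1 + Real.sqrt (1 - ρ ^ 2) * p.2) - σg ^ 2 / 2) -
        xe * Real.exp (σe * p.1 - σe ^ 2 / 2) = Xg p - Xe p := rfl
    rw [hXgXe]
    simp only [Set.indicator_apply, hSdef, Set.mem_setOf_eq]
    by_cases h : t0 ≤ α * p.1 + β * p.2
    · rw [if_pos h, if_pos h, max_eq_left (sub_nonneg.mpr ((hcond p).mpr h))]
    · rw [if_neg h, if_neg h, max_eq_right, sub_zero]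
      have hlt := mt (hcond p).mp h
      linarith [not_le.mp hlt]
  rw [hsplit, integral_sub (hXgInt.indicator hS) (hXeInt.indicator hS)]
  -- Term Xg
  have hTg : ∫ p, S.indicator Xg p ∂((gaussianReal 0 1).prod (gaussianReal 0 1))
      = xg * stdNormalCDF (-((t0 - β ^ 2 - α * (σg * ρ)) / σ)) := by
    rw [MeasureTheory.integral_prod _ (hXgInt.indicator hS)]
    have step1 : ∀ u : ℝ, ∫ w, S.indicator Xg (u, w) ∂(gaussianReal 0 1)
        = rexp ((σg * ρ) * u - (σg * ρ) ^ 2 / 2) *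
          ((fun v => xg * ∫ w, (if t0 - β ^ 2 ≤ α * v + β * w then (1:ℝ) else 0)
            ∂(gaussianReal 0 1)) u) := by
      intro u
      have hpt : ∀ w : ℝ, S.indicator Xg (u, w)
          = (rexp ((σg * ρ) * u - (σg * ρ) ^ 2 / 2) * xg) *
            (rexp (β * w - β ^ 2 / 2) * (if t0 ≤ α * u + β * w then (1:ℝ) else 0)) := by
        intro w
        simp only [Set.indicator_apply, hSdef, Set.mem_setOf_eq, hXgdef]
        split_ifs with h
        · have hexp : σg * (ρ * u + Real.sqrt (1 - ρ ^ 2) * w) - σg ^ 2 / 2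
              = ((σg * ρ) * u - (σg * ρ) ^ 2 / 2) + (β * w - β ^ 2 / 2) := by
            linear_combination (-w) * hβdef + hβsq / 2
          rw [hexp, Real.exp_add]
          ring
        · ring
      rw [integral_congr_ae (Filter.Eventually.of_forall hpt),
        MeasureTheory.integral_const_mul, tilt β]
      have hin : ∀ w : ℝ, (fun w' => if t0 ≤ α * u + β * w' then (1:ℝ) else 0) (w + β)
          = (if t0 - β ^ 2 ≤ α * u + β * w then (1:ℝ) else 0) := by
        intro w
        simp only []
        refine if_congr ?_ rfl rfl
        have hd : β * (w + β) = β * w + β ^ 2 := by ring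
        constructor <;> intro h <;> linarith [hd]
      rw [integral_congr_ae (Filter.Eventually.of_forall hin)]
      ring
    rw [integral_congr_ae (Filter.Eventually.of_forall step1), tilt (σg * ρ)]
    have step2 : ∀ u : ℝ, (fun v => xg * ∫ w, (if t0 - β ^ 2 ≤ α * v + β * w then (1:ℝ) else 0)
          ∂(gaussianReal 0 1)) (u + σg * ρ)
        = xg * ∫ w, (if t0 - β ^ 2 - α * (σg * ρ) ≤ α * u + β * w then (1:ℝ) else 0)
          ∂(gaussianReal 0 1) := by
      intro u
      simp only []
      congr 1
      refine integral_congr_ae (Filter.Eventually.of_forall fun w => ?_)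
      refine if_congr ?_ rfl rfl
      have hd : α * (u + σg * ρ) = α * u + α * (σg * ρ) := by ring
      constructor <;> intro h <;> linarith [hd]
    rw [integral_congr_ae (Filter.Eventually.of_forall step2),
      MeasureTheory.integral_const_mul, prob_halfplane hβ hσ hσ2]
  -- Term Xe
  have hTe : ∫ p, S.indicator Xe p ∂((gaussianReal 0 1).prod (gaussianReal 0 1))
      = xe * stdNormalCDF (-((t0 - α * σe) / σ)) := by
    rw [MeasureTheory.integral_prod _ (hXeInt.indicator hS)]
    have step1 : ∀ u : ℝ, ∫ w, S.indicator Xe (u, w) ∂(gaussianReal 0 1)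
        = rexp (σe * u - σe ^ 2 / 2) *
          ((fun v => xe * ∫ w, (if t0 ≤ α * v + β * w then (1:ℝ) else 0)
            ∂(gaussianReal 0 1)) u) := by
      intro u
      have hpt : ∀ w : ℝ, S.indicator Xe (u, w)
          = (rexp (σe * u - σe ^ 2 / 2) * xe) * (if t0 ≤ α * u + β * w then (1:ℝ) else 0) := by
        intro w
        simp only [Set.indicator_apply, hSdef, Set.mem_setOf_eq, hXedef]
        split_ifs with h
        · ring
        · ring
      rw [integral_congr_ae (Filter.Eventually.of_forall hpt),
        MeasureTheory.integral_const_mul]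
      ring
    rw [integral_congr_ae (Filter.Eventually.of_forall step1), tilt σe]
    have step2 : ∀ u : ℝ, (fun v => xe * ∫ w, (if t0 ≤ α * v + β * w then (1:ℝ) else 0)
          ∂(gaussianReal 0 1)) (u + σe)
        = xe * ∫ w, (if t0 - α * σe ≤ α * u + β * w then (1:ℝ) else 0)
          ∂(gaussianReal 0 1) := by
      intro u
      simp only []
      congr 1
      refine integral_congr_ae (Filter.Eventually.of_forall fun w => ?_)
      refine if_congr ?_ rfl rfl
      have hd : α * (u + σe) = α * u + α * σe := by ring
      constructor <;> intro h <;> linarith [hd]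
    rw [integral_congr_ae (Filter.Eventually.of_forall step2),
      MeasureTheory.integral_const_mul, prob_halfplane hβ hσ hσ2]
  rw [hTg, hTe]
  have hlog : Real.log (xg / xe) = Real.log xg - Real.log xe :=
    Real.log_div hxg.ne' hxe.ne'
  have ht1 : t0 - β ^ 2 - α * (σg * ρ) = (Real.log xe - Real.log xg) - σ ^ 2 / 2 := by
    rw [ht0, hβsq, hαdef, hσsq]; ring
  have ht2 : t0 - α * σe = (Real.log xe - Real.log xg) + σ ^ 2 / 2 := by
    rw [ht0, hαdef, hσsq]; ring
  have e1 : -((t0 - β ^ 2 - α * (σg * ρ)) / σ) = Real.log (xg / xe) / σ + σ / 2 := by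
    rw [ht1, hlog]
    field_simp
    ring
  have e2 : -((t0 - α * σe) / σ) = Real.log (xg / xe) / σ - σ / 2 := by
    rw [ht2, hlog]
    field_simp
    ring
  rw [e1, e2]
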